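/- arXiv:2009.02006 — 6 statements merged into one kernel-verified Lean document; each statement's English description precedes it below -/
import Mathlib

section
/- Fix N ≥ 1, let x_1 < ⋯ < x_N be the roots of H_N, let (Q_m)_{0 ≤ m ≤ N−1} be a dual Hermite family for H_N, and fix 0 ≤ m ≤ N − 1. Then for every 1 ≤ i ≤ N: (m/2)·Q_m(x_i) = Σ_{j ≠ i} ( Q_m(x_i) − Q_m(x_j) ) / (x_i − x_j)². -/
open Polynomial Finset

noncomputable def hermiteR (k : ℕ) : Polynomial ℝ :=
  (Polynomial.hermite k).map (Int.castRingHom ℝ)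

lemma hermiteR_monic (n : ℕ) : (hermiteR n).Monic :=
  (Polynomial.hermite_monic n).map _

lemma hermiteR_natDegree (n : ℕ) : (hermiteR n).natDegree = n := by
  rw [hermiteR, (Polynomial.hermite_monic n).natDegree_map, Polynomial.natDegree_hermite]

lemma hermiteR_succ (n : ℕ) :
    hermiteR (n+1) = X * hermiteR n - derivative (hermiteR n) := by
  rw [hermiteR, Polynomial.hermite_succ, Polynomial.map_sub, Polynomial.map_mul,
    Polynomial.map_X, ← derivative_map]
  rfl

lemma derivative_hermite (n : ℕ) :
    derivative (Polynomial.hermite (n+1)) = C ((n:ℤ)+1) * Polynomial.hermite n := by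
  induction n with
  | zero => simp [Polynomial.hermite_one, Polynomial.hermite_zero]
  | succ n ih =>
    rw [Polynomial.hermite_succ (n+1), derivative_sub, derivative_mul, derivative_X, one_mul, ih,
      derivative_mul, derivative_C, zero_mul, zero_add]
    have h := Polynomial.hermite_succ n
    have : X * (C ((n:ℤ)+1) * Polynomial.hermite n) - C ((n:ℤ)+1) * derivative (Polynomial.hermite n)
        = C ((n:ℤ)+1) * Polynomial.hermite (n+1) := by rw [h]; ring
    have hC : (C (((n+1:ℕ):ℤ)+1) : Polynomial ℤ) = C ((n:ℤ)+1) + 1 := by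
      rw [show ((n+1:ℕ):ℤ)+1 = ((n:ℤ)+1)+1 by push_cast; ring, C_add, C_1]
    rw [hC]
    linear_combination this

lemma hermiteR_ode (n : ℕ) :
    derivative (derivative (hermiteR (n+1))) =
      X * derivative (hermiteR (n+1)) - C ((n:ℝ)+1) * hermiteR (n+1) := by
  have h1 : derivative (hermiteR (n+1)) = C ((n:ℝ)+1) * hermiteR n := by
    rw [hermiteR, derivative_map, derivative_hermite, Polynomial.map_mul, Polynomial.map_C]
    rw [show ((Polynomial.hermite n).map (Int.castRingHom ℝ)) = hermiteR n from rfl]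
    simp [mul_comm]
  have h2 : derivative (hermiteR n) = X * hermiteR n - hermiteR (n+1) := by
    rw [hermiteR_succ n]; ring
  rw [h1, derivative_mul, derivative_C, zero_mul, zero_add, h2]
  ring
lemma prod_neg' (s : Finset ℕ) (f : ℕ → ℝ) :
    ∏ j ∈ s, (-f j) = (-1)^s.card * ∏ j ∈ s, f j := by
  calc ∏ j ∈ s, (-f j) = ∏ j ∈ s, ((-1) * f j) := by
        apply Finset.prod_congr rfl; intros; ring
    _ = (∏ _j ∈ s, (-1:ℝ)) * ∏ j ∈ s, f j := Finset.prod_mul_distrib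
    _ = (-1)^s.card * ∏ j ∈ s, f j := by rw [Finset.prod_const]

lemma roots_eq_of (p : Polynomial ℝ) (hp : p.Monic) (n : ℕ) (hdeg : p.natDegree = n)
    (a : ℕ → ℝ) (hmono : ∀ i j, i < j → j < n → a i < a j)
    (hroot : ∀ i < n, p.eval (a i) = 0) :
    p.roots = (Multiset.range n).map a := by
  have hinj : ∀ i ∈ Multiset.range n, ∀ j ∈ Multiset.range n, a i = a j → i = j := by
    intro i hi j hj hij
    simp only [Multiset.mem_range] at hi hj
    rcases lt_trichotomy i j with h | h | h
    · exact absurd hij (ne_of_lt (hmono i j h hj))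
    · exact h
    · exact absurd hij.symm (ne_of_lt (hmono j i h hi))
  have hnd : ((Multiset.range n).map a).Nodup :=
    (Multiset.nodup_range n).map_on hinj
  have hle : (Multiset.range n).map a ≤ p.roots := by
    rw [Multiset.le_iff_count]
    intro y
    by_cases hy : y ∈ (Multiset.range n).map a
    · have h1 : Multiset.count y ((Multiset.range n).map a) = 1 :=
        le_antisymm (Multiset.nodup_iff_count_le_one.mp hnd y)
          (Multiset.one_le_count_iff_mem.mpr hy)
      rw [h1]
      rw [Multiset.one_le_count_iff_mem, Polynomial.mem_roots hp.ne_zero]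
      obtain ⟨i, hi, rfl⟩ := Multiset.mem_map.mp hy
      exact hroot i (Multiset.mem_range.mp hi)
    · rw [Multiset.count_eq_zero_of_notMem hy]
      exact Nat.zero_le _
  refine (Multiset.eq_of_le_of_card_le hle ?_).symm
  rw [Multiset.card_map, Multiset.card_range]
  exact le_trans (p.card_roots') (le_of_eq hdeg)

lemma derivative_finset_prod (s : Finset ℕ) (f : ℕ → Polynomial ℝ) :
    derivative (∏ j ∈ s, f j) = ∑ b ∈ s, (∏ j ∈ s.erase b, f j) * derivative (f b) := by
  classical
  induction s using Finset.induction_on with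
  | empty => simp
  | insert c t hnotmem ih =>
    rw [Finset.prod_insert hnotmem, derivative_mul, ih, Finset.sum_insert hnotmem,
      Finset.erase_insert hnotmem]
    rw [Finset.mul_sum]
    congr 1
    · ring
    · apply Finset.sum_congr rfl
      intro b hb
      have hbc : c ≠ b := fun h => hnotmem (h ▸ hb)
      rw [Finset.erase_insert_of_ne hbc,
        Finset.prod_insert (fun h => hnotmem (Finset.mem_of_mem_erase h))]
      ring

lemma eval_deriv_prod (s : Finset ℕ) (a : ℕ → ℝ) (i : ℕ) (hi : i ∈ s)
    (hinj : ∀ j ∈ s, a j = a i → j = i) :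
    eval (a i) (derivative (∏ j ∈ s, (X - C (a j)))) = ∏ j ∈ s.erase i, (a i - a j) := by
  rw [derivative_finset_prod, eval_finset_sum]
  rw [Finset.sum_eq_single i]
  · simp [eval_prod]
  · intro b hb hbi
    have : eval (a i) (∏ j ∈ s.erase b, (X - C (a j))) = 0 := by
      rw [eval_prod]
      refine Finset.prod_eq_zero (Finset.mem_erase.mpr ⟨Ne.symm hbi, hi⟩) ?_
      · simp
    simp [this]
  · intro h; exact absurd hi h

lemma sign_prod (n i : ℕ) (hi : i < n) (a : ℕ → ℝ)
    (hmono : ∀ p q, p < q → q < n → a p < a q) :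
    0 < (-1)^(n-1-i) * ∏ j ∈ (Finset.range n).erase i, (a i - a j) := by
  have hsplit : (Finset.range n).erase i = Finset.range i ∪ Finset.Ico (i+1) n := by
    ext j
    simp only [Finset.mem_erase, Finset.mem_range, Finset.mem_union, Finset.mem_Ico]
    omega
  have hdisj : Disjoint (Finset.range i) (Finset.Ico (i+1) n) := by
    rw [Finset.disjoint_left]
    intro j hj hj2
    simp only [Finset.mem_range] at hj
    simp only [Finset.mem_Ico] at hj2
    omega
  rw [hsplit, Finset.prod_union hdisj]
  have h1 : 0 < ∏ j ∈ Finset.range i, (a i - a j) := by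
    apply Finset.prod_pos
    intro j hj
    simp only [Finset.mem_range] at hj
    have := hmono j i hj hi
    linarith
  have h2 : ∏ j ∈ Finset.Ico (i+1) n, (a i - a j)
      = (-1)^(n-1-i) * ∏ j ∈ Finset.Ico (i+1) n, (a j - a i) := by
    rw [show (n-1-i) = (Finset.Ico (i+1) n).card by rw [Nat.card_Ico]; omega]
    rw [← prod_neg']
    apply Finset.prod_congr rfl
    intro j _; ring
  have h3 : 0 < ∏ j ∈ Finset.Ico (i+1) n, (a j - a i) := by
    apply Finset.prod_pos
    intro j hj
    simp only [Finset.mem_Ico] at hj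
    have := hmono i j hj.1 hj.2
    linarith
  rw [h2]
  have hsq : ((-1:ℝ))^(n-1-i) * ((-1)^(n-1-i) * (∏ j ∈ Finset.Ico (i+1) n, (a j - a i)) * (∏ j ∈ Finset.range i, (a i - a j)))
      = (∏ j ∈ Finset.Ico (i+1) n, (a j - a i)) * (∏ j ∈ Finset.range i, (a i - a j)) := by
    rw [← mul_assoc, ← mul_assoc, ← pow_add, ← two_mul, pow_mul]
    norm_num
  calc 0 < (∏ j ∈ Finset.Ico (i+1) n, (a j - a i)) * (∏ j ∈ Finset.range i, (a i - a j)) :=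
        mul_pos h3 h1
    _ = _ := by rw [← hsq]; ring
open Polynomial Finset

section helpers
lemma exists_root_between (p : Polynomial ℝ) {u v : ℝ} (huv : u < v)
    (h : eval u p * eval v p < 0) : ∃ c, u < c ∧ c < v ∧ eval c p = 0 := by
  have hcont : ContinuousOn (fun y => eval y p) (Set.Icc u v) :=
    (Polynomial.continuous p).continuousOn
  rcases lt_or_ge (eval u p) 0 with hu | hu
  · have hv : 0 < eval v p := by nlinarith
    have := intermediate_value_Ioo (le_of_lt huv) hcont
    have h0 : (0:ℝ) ∈ Set.Ioo (eval u p) (eval v p) := ⟨hu, hv⟩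
    obtain ⟨c, hc, hc0⟩ := this h0
    exact ⟨c, hc.1, hc.2, hc0⟩
  · have hu' : 0 < eval u p := by
      rcases lt_or_eq_of_le hu with h' | h'
      · exact h'
      · exfalso; rw [← h'] at h; simp at h
    have hv : eval v p < 0 := by nlinarith
    have := intermediate_value_Ioo' (le_of_lt huv) hcont
    have h0 : (0:ℝ) ∈ Set.Ioo (eval v p) (eval u p) := ⟨hv, hu'⟩
    obtain ⟨c, hc, hc0⟩ := this h0
    exact ⟨c, hc.1, hc.2, hc0⟩

lemma neg_one_pow_odd_sum (k l : ℕ) (h : Odd (k + l)) (E1 E2 : ℝ)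
    (h1 : 0 < (-1)^k * E1) (h2 : 0 < (-1)^l * E2) : E1 * E2 < 0 := by
  have := mul_pos h1 h2
  have hp : ((-1:ℝ))^k * ((-1):ℝ)^l = -1 := by
    rw [← pow_add]; exact Odd.neg_one_pow h
  nlinarith
end helpers

lemma exists_big_pos (p : Polynomial ℝ) (hm : p.Monic) (hd : 0 < p.natDegree) (B : ℝ) :
    ∃ v, B < v ∧ 0 < eval v p := by
  have hdeg : 0 < p.degree := natDegree_pos_iff_degree_pos.mp hd
  have ht := Polynomial.tendsto_atTop_of_leadingCoeff_nonneg p hdeg (by rw [hm.leadingCoeff]; norm_num)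
  have h1 := (ht.eventually_ge_atTop 1).and (Filter.eventually_gt_atTop B)
  obtain ⟨v, hv1, hv2⟩ := h1.exists
  exact ⟨v, hv2, lt_of_lt_of_le one_pos hv1⟩

lemma exists_small_signed (p : Polynomial ℝ) (hm : p.Monic) (n : ℕ) (hd : p.natDegree = n)
    (hn : 0 < n) (B : ℝ) : ∃ u, u < B ∧ 0 < (-1)^n * eval u p := by
  have hXneg : ((-X : Polynomial ℝ)).natDegree = 1 := by simp
  set q : Polynomial ℝ := C ((-1:ℝ)^n) * p.comp (-X) with hq
  have hqc : ∀ y : ℝ, eval y q = (-1)^n * eval (-y) p := by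
    intro y; rw [hq]; simp [eval_comp]
  have hcompdeg : (p.comp (-X)).natDegree = n := by
    rw [natDegree_comp, hXneg, hd, mul_one]
  have hlcneg : ((-X : Polynomial ℝ)).leadingCoeff = -1 := by simp
  have hlcq : q.leadingCoeff = 1 := by
    rw [hq, leadingCoeff_mul, leadingCoeff_C,
      leadingCoeff_comp (by rw [hXneg]; norm_num), hm.leadingCoeff, one_mul, hlcneg, hd,
      ← pow_add, ← two_mul]
    simp [pow_mul]
  have hq0 : q ≠ 0 := fun h => by simp [h] at hlcq
  have hqdeg : 0 < q.degree := by
    apply natDegree_pos_iff_degree_pos.mp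
    rw [hq, natDegree_C_mul (by positivity : ((-1:ℝ)^n) ≠ 0), hcompdeg]
    exact hn
  have ht := Polynomial.tendsto_atTop_of_leadingCoeff_nonneg q hqdeg (by rw [hlcq]; norm_num)
  have h1 := (ht.eventually_ge_atTop 1).and (Filter.eventually_gt_atTop (-B))
  obtain ⟨v, hv1, hv2⟩ := h1.exists
  refine ⟨-v, by linarith, ?_⟩
  have := hqc v
  rw [this] at hv1
  linarith

lemma hermiteR_prod (n : ℕ) (a : ℕ → ℝ)
    (h : (hermiteR n).roots = (Multiset.range n).map a) :
    ∏ j ∈ Finset.range n, (X - C (a j)) = hermiteR n := by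
  have hcard : Multiset.card (hermiteR n).roots = (hermiteR n).natDegree := by
    rw [h, Multiset.card_map, Multiset.card_range, hermiteR_natDegree]
  have := prod_multiset_X_sub_C_of_monic_of_roots_card_eq (hermiteR_monic n) hcard
  rw [h, Multiset.map_map] at this
  rw [← this, Finset.prod_eq_multiset_prod]
  rfl

lemma exists_hermite_roots (n : ℕ) : ∃ a : ℕ → ℝ,
    (∀ i j, i < j → j < n → a i < a j) ∧ (∀ i < n, (hermiteR n).eval (a i) = 0) := by
  induction n with
  | zero => exact ⟨fun _ => 0, fun i j _ h => absurd h (Nat.not_lt_zero j), fun i h => absurd h (Nat.not_lt_zero i)⟩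
  | succ n ih =>
    obtain ⟨a, hmono, hroot⟩ := ih
    have h1R : hermiteR 1 = X := by
      rw [hermiteR_succ 0]
      have h0 : hermiteR 0 = 1 := by
        rw [hermiteR, Polynomial.hermite_zero]; simp
      rw [h0]; simp
    by_cases hn : n = 0
    · subst hn
      refine ⟨fun _ => 0, fun i j hij hj => by omega, fun i hi => ?_⟩
      rw [h1R]; simp
    have hnpos : 0 < n := Nat.pos_of_ne_zero hn
    have hinj : ∀ i, i < n → ∀ j ∈ Finset.range n, a j = a i → j = i := by
      intro i hi j hj hji
      simp only [Finset.mem_range] at hj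
      rcases lt_trichotomy j i with h | h | h
      · exact absurd hji (ne_of_lt (hmono j i h hi))
      · exact h
      · exact absurd hji.symm (ne_of_lt (hmono i j h hj))
    have hroots_eq : (hermiteR n).roots = (Multiset.range n).map a :=
      roots_eq_of _ (hermiteR_monic n) n (hermiteR_natDegree n) a hmono hroot
    have hprod := hermiteR_prod n a hroots_eq
    have heval : ∀ i < n, eval (a i) (hermiteR (n+1))
        = -∏ j ∈ (Finset.range n).erase i, (a i - a j) := by
      intro i hi
      rw [hermiteR_succ n, eval_sub, eval_mul, eval_X, hroot i hi, mul_zero, zero_sub]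
      rw [← hprod, eval_deriv_prod _ a i (Finset.mem_range.mpr hi) (hinj i hi)]
    have hsign : ∀ i < n, 0 < (-1:ℝ)^(n-i) * eval (a i) (hermiteR (n+1)) := by
      intro i hi
      have hs := sign_prod n i hi a hmono
      rw [heval i hi]
      have hpow : (-1:ℝ)^(n-i) = -(-1:ℝ)^(n-1-i) := by
        rw [show n-i = (n-1-i)+1 from by omega, pow_succ]; ring
      rw [hpow]
      nlinarith
    have hm1 : (hermiteR (n+1)).Monic := hermiteR_monic (n+1)
    have hd1 : (hermiteR (n+1)).natDegree = n+1 := hermiteR_natDegree (n+1)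
    -- leftmost root
    obtain ⟨u, hu, husign⟩ := exists_small_signed (hermiteR (n+1)) hm1 (n+1) hd1 (by omega) (a 0)
    have hprod0 : eval u (hermiteR (n+1)) * eval (a 0) (hermiteR (n+1)) < 0 := by
      apply neg_one_pow_odd_sum (n+1) (n-0) _ _ _ husign (hsign 0 hnpos)
      refine ⟨n, by omega⟩
    obtain ⟨c0, _, hc0lt, hc0root⟩ := exists_root_between _ hu hprod0
    -- rightmost root
    obtain ⟨v, hv, hvpos⟩ := exists_big_pos (hermiteR (n+1)) hm1 (by omega) (a (n-1))
    have hprodn : eval (a (n-1)) (hermiteR (n+1)) * eval v (hermiteR (n+1)) < 0 := by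
      have hs := hsign (n-1) (by omega)
      rw [show n - (n-1) = 1 from by omega] at hs
      nlinarith
    obtain ⟨bn, hbnlt, _, hbnroot⟩ := exists_root_between _ hv hprodn
    -- interior roots
    have hint : ∀ i, ∃ c, 1 ≤ i → i < n →
        a (i-1) < c ∧ c < a i ∧ eval c (hermiteR (n+1)) = 0 := by
      intro i
      by_cases hcase : 1 ≤ i ∧ i < n
      · obtain ⟨h1i, hin⟩ := hcase
        have hlt : a (i-1) < a i := hmono (i-1) i (by omega) hin
        have hpr : eval (a (i-1)) (hermiteR (n+1)) * eval (a i) (hermiteR (n+1)) < 0 := by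
          apply neg_one_pow_odd_sum (n-(i-1)) (n-i) _ _ _ (hsign (i-1) (by omega)) (hsign i hin)
          refine ⟨n-i, by omega⟩
        obtain ⟨c, hc1, hc2, hc3⟩ := exists_root_between _ hlt hpr
        exact ⟨c, fun _ _ => ⟨hc1, hc2, hc3⟩⟩
      · exact ⟨0, fun h1 h2 => absurd ⟨h1, h2⟩ hcase⟩
    choose g hg using hint
    set b : ℕ → ℝ := fun i => if i = 0 then c0 else if i < n then g i else bn with hb
    have hb_lt_a : ∀ i < n, b i < a i := by
      intro i hi
      rcases Nat.eq_zero_or_pos i with h0 | h0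
      · subst h0; simpa [hb] using hc0lt
      · have := (hg i h0 hi).2.1
        simp only [hb]
        rw [if_neg (by omega), if_pos hi]
        exact this
    have ha_lt_b : ∀ i < n, a i < b (i+1) := by
      intro i hi
      rcases lt_or_ge (i+1) n with h | h
      · have := (hg (i+1) (by omega) h).1
        simp only [hb]
        rw [if_neg (by omega), if_pos h]
        simpa using this
      · have hin : i + 1 = n := by omega
        simp only [hb]
        rw [if_neg (by omega), if_neg (by omega)]
        rw [show i = n - 1 from by omega]
        exact hbnlt
    have hbroot : ∀ i < n+1, eval (b i) (hermiteR (n+1)) = 0 := by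
      intro i hi
      rcases Nat.eq_zero_or_pos i with h0 | h0
      · subst h0; simpa [hb] using hc0root
      rcases lt_or_ge i n with h | h
      · have := (hg i h0 h).2.2
        simp only [hb]; rw [if_neg (by omega), if_pos h]; exact this
      · simp only [hb]; rw [if_neg (by omega), if_neg (by omega)]; exact hbnroot
    have hchain : ∀ i < n, b i < b (i+1) := fun i hi =>
      lt_trans (hb_lt_a i hi) (ha_lt_b i hi)
    have hstep : ∀ d, ∀ i, i + d + 1 < n + 1 → b i < b (i + d + 1) := by
      intro d
      induction d with
      | zero => intro i h; exact hchain i (by omega)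
      | succ d ihd =>
        intro i h
        refine lt_trans (ihd i (by omega)) ?_
        have := hchain (i+d+1) (by omega)
        rwa [show i + d + 1 + 1 = i + (d+1) + 1 from by omega] at this
    refine ⟨b, ?_, hbroot⟩
    intro i j hij hj
    have := hstep (j - i - 1) i (by omega)
    rwa [show i + (j-i-1) + 1 = j from by omega] at this

lemma eval_deriv2_prod (s : Finset ℕ) (a : ℕ → ℝ) (i : ℕ) (hi : i ∈ s)
    (hinj : ∀ j ∈ s, a j = a i → j = i) :
    eval (a i) (derivative (derivative (∏ j ∈ s, (X - C (a j)))))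
      = 2 * ∑ k ∈ s.erase i, ∏ j ∈ (s.erase i).erase k, (a i - a j) := by
  have h1 : derivative (∏ j ∈ s, (X - C (a j)))
      = ∑ b ∈ s, ∏ j ∈ s.erase b, (X - C (a j)) := by
    rw [derivative_finset_prod]
    apply Finset.sum_congr rfl
    intro b _; simp
  rw [h1, derivative_sum]
  have h2 : ∀ b ∈ s, derivative (∏ j ∈ s.erase b, (X - C (a j)))
      = ∑ l ∈ s.erase b, ∏ j ∈ (s.erase b).erase l, (X - C (a j)) := by
    intro b _
    rw [derivative_finset_prod]
    apply Finset.sum_congr rfl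
    intro l _; simp
  rw [Finset.sum_congr rfl h2, eval_finset_sum]
  have h3 : ∀ b ∈ s, eval (a i) (∑ l ∈ s.erase b, ∏ j ∈ (s.erase b).erase l, (X - C (a j)))
      = ∑ l ∈ s.erase b, ∏ j ∈ (s.erase b).erase l, (a i - a j) := by
    intro b _
    rw [eval_finset_sum]
    apply Finset.sum_congr rfl
    intro l _
    rw [eval_prod]
    apply Finset.prod_congr rfl
    intro j _; simp
  rw [Finset.sum_congr rfl h3]
  rw [← Finset.sum_erase_add _ _ hi]
  have h4 : ∀ b ∈ s.erase i, ∑ l ∈ s.erase b, ∏ j ∈ (s.erase b).erase l, (a i - a j)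
      = ∏ j ∈ (s.erase i).erase b, (a i - a j) := by
    intro b hb
    have hbi : b ≠ i := (Finset.mem_erase.mp hb).1
    have hbs : b ∈ s := (Finset.mem_erase.mp hb).2
    rw [Finset.sum_eq_single i]
    · rw [Finset.erase_right_comm]
    · intro l hl hli
      apply Finset.prod_eq_zero (i := i)
      · rw [Finset.mem_erase, Finset.mem_erase]
        exact ⟨Ne.symm hli, Ne.symm hbi, hi⟩
      · simp
    · intro h
      exact absurd (Finset.mem_erase.mpr ⟨Ne.symm hbi, hi⟩) h
  rw [Finset.sum_congr rfl h4]
  ring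

lemma hermite_recip_sum (N : ℕ) (hN : 1 ≤ N) (a : ℕ → ℝ)
    (hmono : ∀ i j, i < j → j < N → a i < a j)
    (hroots_eq : (hermiteR N).roots = (Multiset.range N).map a) :
    ∀ i < N, ∑ j ∈ (Finset.range N).erase i, 1/(a i - a j) = a i / 2 := by
  intro i hi
  have hprod := hermiteR_prod N a hroots_eq
  have hinj : ∀ j ∈ Finset.range N, a j = a i → j = i := by
    intro j hj hji
    simp only [Finset.mem_range] at hj
    rcases lt_trichotomy j i with h | h | h
    · exact absurd hji (ne_of_lt (hmono j i h hi))
    · exact h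
    · exact absurd hji.symm (ne_of_lt (hmono i j h hj))
  have hD : eval (a i) (derivative (hermiteR N)) = ∏ j ∈ (Finset.range N).erase i, (a i - a j) := by
    rw [← hprod]; exact eval_deriv_prod _ a i (Finset.mem_range.mpr hi) hinj
  have hD2 : eval (a i) (derivative (derivative (hermiteR N)))
      = 2 * ∑ k ∈ (Finset.range N).erase i, ∏ j ∈ ((Finset.range N).erase i).erase k, (a i - a j) := by
    rw [← hprod]; exact eval_deriv2_prod _ a i (Finset.mem_range.mpr hi) hinj
  have hDne : ∏ j ∈ (Finset.range N).erase i, (a i - a j) ≠ 0 := by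
    apply Finset.prod_ne_zero_iff.mpr
    intro j hj
    have hjne : j ≠ i := (Finset.mem_erase.mp hj).1
    have hjr : j < N := Finset.mem_range.mp (Finset.mem_erase.mp hj).2
    rcases lt_trichotomy j i with h | h | h
    · have := hmono j i h hi; intro hc; linarith
    · exact absurd h hjne
    · have := hmono i j h hjr; intro hc; linarith
  have hrooti : eval (a i) (hermiteR N) = 0 := by
    have : (a i) ∈ (hermiteR N).roots := by
      rw [hroots_eq]
      exact Multiset.mem_map.mpr ⟨i, Multiset.mem_range.mpr hi, rfl⟩
    exact (Polynomial.mem_roots (hermiteR_monic N).ne_zero).mp this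
  have hode := hermiteR_ode (N-1)
  rw [show N - 1 + 1 = N from by omega] at hode
  have hodeeval : eval (a i) (derivative (derivative (hermiteR N)))
      = a i * eval (a i) (derivative (hermiteR N)) := by
    rw [hode]
    rw [eval_sub, eval_mul, eval_mul, eval_X, eval_C, hrooti, mul_zero, sub_zero]
  -- combine
  have hterm : ∀ k ∈ (Finset.range N).erase i,
      1/(a i - a k) = (∏ j ∈ ((Finset.range N).erase i).erase k, (a i - a j))
        / (∏ j ∈ (Finset.range N).erase i, (a i - a j)) := by
    intro k hk
    have hmul := Finset.mul_prod_erase _ (fun j => a i - a j) hk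
    rw [← hmul]
    have hne : a i - a k ≠ 0 := by
      intro h
      have : k = i := hinj k (Finset.mem_erase.mp hk).2 (by linarith)
      exact (Finset.mem_erase.mp hk).1 this
    have hne2 : ∏ j ∈ ((Finset.range N).erase i).erase k, (a i - a j) ≠ 0 := by
      intro h
      apply hDne
      rw [← hmul, h, mul_zero]
    field_simp
  rw [Finset.sum_congr rfl hterm, ← Finset.sum_div]
  rw [div_eq_iff hDne]
  have : 2 * ∑ k ∈ (Finset.range N).erase i, ∏ j ∈ ((Finset.range N).erase i).erase k, (a i - a j)
      = a i * ∏ j ∈ (Finset.range N).erase i, (a i - a j) := by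
    rw [← hD2, ← hD, hodeeval]
  linarith

lemma div_diff_pow (y z : ℝ) (hyz : y ≠ z) (n : ℕ) :
    (y^n - z^n)/(y-z)^2 = (n:ℝ)*y^(n-1)/(y-z)
      - ∑ t ∈ Finset.range n, y^t * (∑ c ∈ Finset.range (n-1-t), y^c * z^(n-2-t-c)) := by
  have hyz' : y - z ≠ 0 := sub_ne_zero.mpr hyz
  set S : ℝ := ∑ t ∈ Finset.range n, y^t * (∑ c ∈ Finset.range (n-1-t), y^c * z^(n-2-t-c)) with hS
  have key1 : S * (y - z) = (n:ℝ)*y^(n-1) - ∑ t ∈ Finset.range n, y^t * z^(n-1-t) := by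
    rw [hS, Finset.sum_mul]
    have hterm : ∀ t ∈ Finset.range n,
        (y^t * (∑ c ∈ Finset.range (n-1-t), y^c * z^(n-2-t-c))) * (y - z)
          = y^(n-1) - y^t * z^(n-1-t) := by
      intro t ht
      have htn : t < n := Finset.mem_range.mp ht
      have hg := geom_sum₂_mul y z (n-1-t)
      have hinner : (∑ c ∈ Finset.range (n-1-t), y^c * z^(n-1-t-1-c)) * (y - z)
          = y^(n-1-t) - z^(n-1-t) := hg
      have heq : ∑ c ∈ Finset.range (n-1-t), y^c * z^(n-2-t-c)
          = ∑ c ∈ Finset.range (n-1-t), y^c * z^(n-1-t-1-c) := by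
        apply Finset.sum_congr rfl
        intro c _
        congr 2
        omega
      rw [heq, mul_assoc, hinner, mul_sub, ← pow_add]
      congr 2
      omega
    rw [Finset.sum_congr rfl hterm, Finset.sum_sub_distrib, Finset.sum_const, Finset.card_range]
    simp [nsmul_eq_mul]
  have key2 : (∑ t ∈ Finset.range n, y^t * z^(n-1-t)) * (y - z) = y^n - z^n :=
    geom_sum₂_mul y z n
  have hfin : y^n - z^n = (n:ℝ)*y^(n-1)*(y-z) - S*(y-z)^2 := by
    have : S*(y-z)^2 = (S*(y-z))*(y-z) := by ring
    rw [this, key1, sub_mul, key2]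
    ring
  rw [hfin]
  field_simp

noncomputable def gmon (N : ℕ) (a : ℕ → ℝ) (n : ℕ) : Polynomial ℝ :=
  C ((n:ℝ)/2) * X^n + ∑ t ∈ Finset.range n, ∑ c ∈ Finset.range (n-1-t),
    ((X:Polynomial ℝ)^(n-2) - C (∑ j ∈ Finset.range N, (a j)^(n-2-t-c)) * X^(t+c))

lemma gmon_natDegree_le (N : ℕ) (a : ℕ → ℝ) (n : ℕ) : (gmon N a n).natDegree ≤ n := by
  apply le_trans (Polynomial.natDegree_add_le _ _)
  apply max_le
  · apply le_trans (Polynomial.natDegree_C_mul_le _ _)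
    simp
  · apply Polynomial.natDegree_sum_le_of_forall_le
    intro t ht
    apply Polynomial.natDegree_sum_le_of_forall_le
    intro c hc
    apply le_trans (Polynomial.natDegree_sub_le _ _)
    apply max_le
    · rw [Polynomial.natDegree_X_pow]; omega
    · apply le_trans (Polynomial.natDegree_C_mul_le _ _)
      rw [Polynomial.natDegree_X_pow]
      simp only [Finset.mem_range] at ht hc
      omega

lemma gmon_coeff_top (N : ℕ) (a : ℕ → ℝ) (n : ℕ) (hn : 1 ≤ n) :
    (gmon N a n).coeff n = (n:ℝ)/2 := by
  rw [gmon, Polynomial.coeff_add]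
  have h1 : (C ((n:ℝ)/2) * X^n).coeff n = (n:ℝ)/2 := by
    rw [Polynomial.coeff_C_mul, Polynomial.coeff_X_pow]
    simp
  rw [h1]
  have h2 : (∑ t ∈ Finset.range n, ∑ c ∈ Finset.range (n-1-t),
      ((X:Polynomial ℝ)^(n-2) - C (∑ j ∈ Finset.range N, (a j)^(n-2-t-c)) * X^(t+c))).coeff n = 0 := by
    rw [Polynomial.finset_sum_coeff]
    apply Finset.sum_eq_zero
    intro t ht
    rw [Polynomial.finset_sum_coeff]
    apply Finset.sum_eq_zero
    intro c hc
    simp only [Finset.mem_range] at ht hc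
    rw [Polynomial.coeff_sub, Polynomial.coeff_X_pow, Polynomial.coeff_C_mul,
      Polynomial.coeff_X_pow]
    rw [if_neg (by omega), if_neg (by omega)]
    ring
  rw [h2, add_zero]

lemma gmon_eval (N : ℕ) (a : ℕ → ℝ)
    (hinj : ∀ i j, i < N → j < N → a i = a j → i = j)
    (hrecip : ∀ i < N, ∑ j ∈ (Finset.range N).erase i, 1/(a i - a j) = a i / 2)
    (n : ℕ) (i : ℕ) (hi : i < N) :
    eval (a i) (gmon N a n)
      = ∑ j ∈ (Finset.range N).erase i, ((a i)^n - (a j)^n)/((a i) - (a j))^2 := by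
  set y := a i with hy
  have hane : ∀ j ∈ (Finset.range N).erase i, y ≠ a j := by
    intro j hj
    intro h
    exact (Finset.mem_erase.mp hj).1
      (hinj j i (Finset.mem_range.mp (Finset.mem_erase.mp hj).2) hi h.symm)
  -- rewrite each term by div_diff_pow
  have hterm : ∀ j ∈ (Finset.range N).erase i,
      (y^n - (a j)^n)/(y - a j)^2
        = (n:ℝ)*y^(n-1) * (1/(y - a j))
          - ∑ t ∈ Finset.range n, y^t * (∑ c ∈ Finset.range (n-1-t), y^c * (a j)^(n-2-t-c)) := by
    intro j hj
    rw [div_diff_pow y (a j) (hane j hj) n]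
    ring
  rw [Finset.sum_congr rfl hterm, Finset.sum_sub_distrib, ← Finset.mul_sum, hrecip i hi]
  -- the remaining double sum over erase = full sum minus diagonal
  have hdiag : ∑ t ∈ Finset.range n, y^t * (∑ c ∈ Finset.range (n-1-t), y^c * y^(n-2-t-c))
      = ∑ t ∈ Finset.range n, ∑ c ∈ Finset.range (n-1-t), y^(n-2) := by
    apply Finset.sum_congr rfl
    intro t ht
    rw [Finset.mul_sum]
    apply Finset.sum_congr rfl
    intro c hc
    simp only [Finset.mem_range] at ht hc
    rw [← pow_add, ← pow_add]
    congr 1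
    omega
  have hfull : ∀ j, ∑ t ∈ Finset.range n, y^t * (∑ c ∈ Finset.range (n-1-t), y^c * (a j)^(n-2-t-c))
      = ∑ t ∈ Finset.range n, ∑ c ∈ Finset.range (n-1-t), y^(t+c) * (a j)^(n-2-t-c) := by
    intro j
    apply Finset.sum_congr rfl
    intro t _
    rw [Finset.mul_sum]
    apply Finset.sum_congr rfl
    intro c _
    rw [← mul_assoc, ← pow_add]
  have hsum_erase : ∑ j ∈ (Finset.range N).erase i,
      (∑ t ∈ Finset.range n, y^t * (∑ c ∈ Finset.range (n-1-t), y^c * (a j)^(n-2-t-c)))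
      = (∑ j ∈ Finset.range N, ∑ t ∈ Finset.range n, ∑ c ∈ Finset.range (n-1-t), y^(t+c) * (a j)^(n-2-t-c))
        - ∑ t ∈ Finset.range n, ∑ c ∈ Finset.range (n-1-t), y^(n-2) := by
    rw [← hdiag]
    have := Finset.sum_erase_add (Finset.range N)
      (fun j => ∑ t ∈ Finset.range n, y^t * (∑ c ∈ Finset.range (n-1-t), y^c * (a j)^(n-2-t-c)))
      (Finset.mem_range.mpr hi)
    have hfull' : ∑ j ∈ Finset.range N,
        (∑ t ∈ Finset.range n, y^t * (∑ c ∈ Finset.range (n-1-t), y^c * (a j)^(n-2-t-c)))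
        = ∑ j ∈ Finset.range N, ∑ t ∈ Finset.range n, ∑ c ∈ Finset.range (n-1-t), y^(t+c) * (a j)^(n-2-t-c) := by
      apply Finset.sum_congr rfl
      intro j _
      exact hfull j
    rw [← hfull', ← this, hy]
    ring
  rw [hsum_erase]
  -- swap sums in the full triple sum
  have hswap : ∑ j ∈ Finset.range N, ∑ t ∈ Finset.range n, ∑ c ∈ Finset.range (n-1-t), y^(t+c) * (a j)^(n-2-t-c)
      = ∑ t ∈ Finset.range n, ∑ c ∈ Finset.range (n-1-t), (∑ j ∈ Finset.range N, (a j)^(n-2-t-c)) * y^(t+c) := by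
    rw [Finset.sum_comm]
    apply Finset.sum_congr rfl
    intro t _
    rw [Finset.sum_comm]
    apply Finset.sum_congr rfl
    intro c _
    rw [Finset.sum_mul]
    apply Finset.sum_congr rfl
    intro j _
    ring
  rw [hswap]
  -- evaluate the polynomial
  rw [gmon]
  rw [eval_add, eval_mul, eval_C, eval_pow, eval_X, eval_finset_sum]
  have heval2 : ∀ t ∈ Finset.range n,
      eval y (∑ c ∈ Finset.range (n-1-t), ((X:Polynomial ℝ)^(n-2) - C (∑ j ∈ Finset.range N, (a j)^(n-2-t-c)) * X^(t+c)))
      = ∑ c ∈ Finset.range (n-1-t), (y^(n-2) - (∑ j ∈ Finset.range N, (a j)^(n-2-t-c)) * y^(t+c)) := by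
    intro t _
    rw [eval_finset_sum]
    apply Finset.sum_congr rfl
    intro c _
    rw [eval_sub, eval_pow, eval_X, eval_mul, eval_C, eval_pow, eval_X]
  rw [Finset.sum_congr rfl heval2]
  -- final algebra: (n/2) y^n vs n y^(n-1) (y/2)
  have hpow : (n:ℝ) * y^(n-1) * (y/2) = (n:ℝ)/2 * y^n := by
    rcases Nat.eq_zero_or_pos n with h0 | h0
    · subst h0; simp
    · have : y^(n-1) * y = y^n := by
        rw [← pow_succ]
        congr 1
        omega
      linear_combination ((n:ℝ)/2) * this
  rw [← hpow]
  have hsplit : ∑ t ∈ Finset.range n, ∑ c ∈ Finset.range (n-1-t), (y^(n-2) - (∑ j ∈ Finset.range N, (a j)^(n-2-t-c)) * y^(t+c))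
      = (∑ t ∈ Finset.range n, ∑ c ∈ Finset.range (n-1-t), y^(n-2))
        - ∑ t ∈ Finset.range n, ∑ c ∈ Finset.range (n-1-t), (∑ j ∈ Finset.range N, (a j)^(n-2-t-c)) * y^(t+c) := by
    rw [← Finset.sum_sub_distrib]
    apply Finset.sum_congr rfl
    intro t _
    rw [← Finset.sum_sub_distrib]
  rw [hsplit, ← hy]
  ring

lemma sum_erase_swap (s : Finset ℕ) (H : ℕ → ℕ → ℝ) :
    ∑ i ∈ s, ∑ j ∈ s.erase i, H i j = ∑ i ∈ s, ∑ j ∈ s.erase i, H j i := by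
  have key : ∀ G : ℕ → ℕ → ℝ, ∑ i ∈ s, ∑ j ∈ s.erase i, G i j
      = ∑ i ∈ s, ∑ j ∈ s, if j ≠ i then G i j else 0 := by
    intro G
    apply Finset.sum_congr rfl
    intro i _
    rw [← Finset.filter_ne' s i, Finset.sum_filter]
  rw [key, key]
  rw [Finset.sum_comm]
  apply Finset.sum_congr rfl
  intro i _
  apply Finset.sum_congr rfl
  intro j _
  by_cases h : i = j
  · subst h; simp
  · rw [if_pos (Ne.symm h), if_pos h]

lemma Bswap (s : Finset ℕ) (b : ℕ → ℝ) (u v : ℕ → ℝ) :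
    ∑ i ∈ s, (∑ j ∈ s.erase i, (u i - u j) / (b i - b j)^2) * v i
      = ∑ i ∈ s, (∑ j ∈ s.erase i, (v i - v j) / (b i - b j)^2) * u i := by
  have expand : ∀ w z : ℕ → ℝ, ∑ i ∈ s, (∑ j ∈ s.erase i, (w i - w j) / (b i - b j)^2) * z i
      = ∑ i ∈ s, ∑ j ∈ s.erase i, (w i - w j) * z i / (b i - b j)^2 := by
    intro w z
    apply Finset.sum_congr rfl
    intro i _
    rw [Finset.sum_mul]
    apply Finset.sum_congr rfl
    intro j _
    ring
  rw [expand, expand]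
  have hdiff : ∑ i ∈ s, ∑ j ∈ s.erase i, ((u i - u j) * v i / (b i - b j)^2
      - (v i - v j) * u i / (b i - b j)^2)
      = ∑ i ∈ s, ∑ j ∈ s.erase i, (u i * v j - u j * v i) / (b i - b j)^2 := by
    apply Finset.sum_congr rfl
    intro i _
    apply Finset.sum_congr rfl
    intro j _
    ring
  have hanti : ∑ i ∈ s, ∑ j ∈ s.erase i, (u i * v j - u j * v i) / (b i - b j)^2 = 0 := by
    have h1 := sum_erase_swap s (fun i j => (u i * v j - u j * v i) / (b i - b j)^2)
    have h2 : ∑ i ∈ s, ∑ j ∈ s.erase i, (u j * v i - u i * v j) / (b j - b i)^2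
        = -∑ i ∈ s, ∑ j ∈ s.erase i, (u i * v j - u j * v i) / (b i - b j)^2 := by
      rw [← Finset.sum_neg_distrib]
      apply Finset.sum_congr rfl
      intro i _
      rw [← Finset.sum_neg_distrib]
      apply Finset.sum_congr rfl
      intro j _
      rw [show (b j - b i)^2 = (b i - b j)^2 from by ring]
      ring
    have := h1.trans h2
    linarith
  have := hdiff
  rw [Finset.sum_congr rfl (fun i _ => Finset.sum_sub_distrib _ _), Finset.sum_sub_distrib] at this
  rw [hanti] at this
  linarith

lemma inner_expand (N : ℕ) (a : ℕ → ℝ) (Q : ℕ → Polynomial ℝ)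
    (hQm : ∀ k < N, (Q k).Monic ∧ (Q k).natDegree = k) (u : Polynomial ℝ) :
    ∀ d, d ≤ N → (∀ k < d, ∑ j ∈ Finset.range N, eval (a j) (Q k) * eval (a j) u = 0) →
      ∀ p : Polynomial ℝ, p.degree < (d : ℕ) →
        ∑ j ∈ Finset.range N, eval (a j) p * eval (a j) u = 0 := by
  intro d
  induction d with
  | zero =>
    intro _ _ p hp
    have hp0 : p = 0 := by
      by_contra h
      rw [Polynomial.degree_eq_natDegree h] at hp
      exact absurd hp (by exact_mod_cast Nat.not_lt_zero _)
    subst hp0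
    simp
  | succ d ihd =>
    intro hdN hk p hp
    have hdN' : d ≤ N := by omega
    have hk' : ∀ k < d, ∑ j ∈ Finset.range N, eval (a j) (Q k) * eval (a j) u = 0 :=
      fun k hkd => hk k (by omega)
    set c := p.coeff d with hc
    set r := p - C c * Q d with hr
    have hQd := hQm d (by omega)
    have hrdeg : r.degree < (d : ℕ) := by
      rw [Polynomial.degree_lt_iff_coeff_zero]
      intro k hdk
      rw [hr, Polynomial.coeff_sub, Polynomial.coeff_C_mul]
      rcases lt_or_eq_of_le (by exact_mod_cast hdk : d ≤ k) with h | h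
      · have h1 : p.coeff k = 0 := by
          apply Polynomial.coeff_eq_zero_of_degree_lt
          exact lt_of_lt_of_le hp (by exact_mod_cast h)
        have h2 : (Q d).coeff k = 0 :=
          Polynomial.coeff_eq_zero_of_natDegree_lt (by rw [hQd.2]; exact h)
        rw [h1, h2, mul_zero, sub_zero]
      · have h2 : (Q d).coeff d = 1 := by
          have := hQd.1
          rw [Polynomial.Monic, Polynomial.leadingCoeff, hQd.2] at this
          exact this
        rw [← h, h2, mul_one, hc, sub_self]
    have hsplit : ∀ j, eval (a j) p = c * eval (a j) (Q d) + eval (a j) r := by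
      intro j
      rw [hr]
      simp only [eval_sub, eval_mul, eval_C]
      ring
    calc ∑ j ∈ Finset.range N, eval (a j) p * eval (a j) u
        = c * (∑ j ∈ Finset.range N, eval (a j) (Q d) * eval (a j) u)
          + ∑ j ∈ Finset.range N, eval (a j) r * eval (a j) u := by
          rw [Finset.mul_sum, ← Finset.sum_add_distrib]
          apply Finset.sum_congr rfl
          intro j _
          rw [hsplit j]
          ring
      _ = 0 := by rw [hk d (by omega), ihd hdN' hk' r hrdeg]; ring

lemma exists_Afun (N : ℕ) (a : ℕ → ℝ)
    (hinj : ∀ i j, i < N → j < N → a i = a j → i = j)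
    (hrecip : ∀ i < N, ∑ j ∈ (Finset.range N).erase i, 1/(a i - a j) = a i / 2)
    (f : Polynomial ℝ) :
    ∃ g : Polynomial ℝ, g.natDegree ≤ f.natDegree ∧
      (∀ k, f.natDegree ≤ k → g.coeff k = ((k:ℝ)/2) * f.coeff k) ∧
      ∀ i < N, eval (a i) g = ∑ j ∈ (Finset.range N).erase i,
        (eval (a i) f - eval (a j) f)/(a i - a j)^2 := by
  set D := f.natDegree with hD
  refine ⟨∑ n ∈ Finset.range (D+1), C (f.coeff n) * gmon N a n, ?_, ?_, ?_⟩
  · apply Polynomial.natDegree_sum_le_of_forall_le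
    intro n hn
    apply le_trans (Polynomial.natDegree_C_mul_le _ _)
    exact le_trans (gmon_natDegree_le N a n) (by simp only [Finset.mem_range] at hn; omega)
  · intro k hk
    rw [Polynomial.finset_sum_coeff]
    rcases lt_or_eq_of_le hk with h | h
    · rw [Finset.sum_eq_zero, Polynomial.coeff_eq_zero_of_natDegree_lt (by rw [← hD]; exact h),
        mul_zero]
      intro n hn
      simp only [Finset.mem_range] at hn
      rw [Polynomial.coeff_C_mul, Polynomial.coeff_eq_zero_of_natDegree_lt
        (lt_of_le_of_lt (gmon_natDegree_le N a n) (by omega)), mul_zero]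
    · subst h
      rw [Finset.sum_eq_single D]
      · rcases Nat.eq_zero_or_pos D with h0 | h0
        · rw [h0]
          simp [gmon]
        · rw [Polynomial.coeff_C_mul, gmon_coeff_top N a D h0]
          ring
      · intro n hn hne
        simp only [Finset.mem_range] at hn
        rw [Polynomial.coeff_C_mul, Polynomial.coeff_eq_zero_of_natDegree_lt
          (lt_of_le_of_lt (gmon_natDegree_le N a n) (by omega)), mul_zero]
      · intro h
        exact absurd (Finset.mem_range.mpr (by omega)) h
  · intro i hi
    rw [eval_finset_sum]
    have h1 : ∀ n ∈ Finset.range (D+1), eval (a i) (C (f.coeff n) * gmon N a n)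
        = f.coeff n * ∑ j ∈ (Finset.range N).erase i, ((a i)^n - (a j)^n)/((a i) - (a j))^2 := by
      intro n _
      rw [eval_mul, eval_C, gmon_eval N a hinj hrecip n i hi]
    rw [Finset.sum_congr rfl h1]
    have h2 : ∑ n ∈ Finset.range (D+1), f.coeff n
        * ∑ j ∈ (Finset.range N).erase i, ((a i)^n - (a j)^n)/((a i) - (a j))^2
        = ∑ j ∈ (Finset.range N).erase i, ∑ n ∈ Finset.range (D+1),
          f.coeff n * (((a i)^n - (a j)^n)/((a i) - (a j))^2) := by
      rw [Finset.sum_congr rfl (fun n _ => Finset.mul_sum _ _ _)]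
      exact Finset.sum_comm
    rw [h2]
    apply Finset.sum_congr rfl
    intro j hj
    have hne : a i - a j ≠ 0 := by
      intro h
      exact (Finset.mem_erase.mp hj).1
        (hinj j i (Finset.mem_range.mp (Finset.mem_erase.mp hj).2) hi (by linarith))
    have hev : ∀ x : ℝ, eval x f = ∑ n ∈ Finset.range (D+1), f.coeff n * x^n := by
      intro x
      rw [Polynomial.eval_eq_sum_range, hD]
    rw [hev (a i), hev (a j), ← Finset.sum_sub_distrib, Finset.sum_div]
    apply Finset.sum_congr rfl
    intro n _
    ring

/-- A dual Hermite family for `H_k`: real polynomials `Q_0, …, Q_{k-1}` with `Q_m` monic of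
degree `m`, orthogonal for the counting measure on the `k` distinct real roots of `H_k`. -/
def IsDualHermiteFamily (k : ℕ) (Q : ℕ → Polynomial ℝ) : Prop :=
  (∀ m < k, (Q m).Monic ∧ (Q m).natDegree = m) ∧
  ∀ m < k, ∀ n < k, m ≠ n →
    ((hermiteR k).roots.map (fun x => (Q m).eval x * (Q n).eval x)).sum = 0

theorem stmt13 (N : ℕ) (hN : 1 ≤ N)
    -- `x i` is the `i`-th smallest root of `H_N` (1-indexed, junk value otherwise)
    (x : ℕ → ℝ)
    (hx : ∀ i, x i = ((hermiteR N).roots.sort (· ≤ ·)).getD (i - 1) 0)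
    (Q : ℕ → Polynomial ℝ) (hQ : IsDualHermiteFamily N Q)
    (m : ℕ) (hm : m ≤ N - 1) :
    ∀ i, 1 ≤ i → i ≤ N →
      ((m : ℝ) / 2) * (Q m).eval (x i) =
        ∑ j ∈ (Finset.Icc 1 N).erase i,
          ((Q m).eval (x i) - (Q m).eval (x j)) / (x i - x j) ^ 2 := by
  obtain ⟨hQdeg, hQorth⟩ := hQ
  obtain ⟨a, hmono, hroot⟩ := exists_hermite_roots N
  have hroots_eq := roots_eq_of _ (hermiteR_monic N) N (hermiteR_natDegree N) a hmono hroot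
  have hinj : ∀ i j, i < N → j < N → a i = a j → i = j := by
    intro i j hi hj hij
    rcases lt_trichotomy i j with h | h | h
    · exact absurd hij (ne_of_lt (hmono i j h hj))
    · exact h
    · exact absurd hij.symm (ne_of_lt (hmono j i h hi))
  have hrecip := hermite_recip_sum N hN a hmono hroots_eq
  -- identify the sorted list of roots
  have hlist : (hermiteR N).roots = (((List.range N).map a : List ℝ) : Multiset ℝ) := by
    rw [hroots_eq]
    rfl
  have hsorted : ((List.range N).map a).Pairwise (· ≤ ·) := by
    rw [List.pairwise_map]
    apply List.Pairwise.imp_of_mem ?_ (List.pairwise_lt_range (n := N))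
    intro p q hp hq hpq
    exact le_of_lt (hmono p q hpq (List.mem_range.mp hq))
  have hsortlist : (hermiteR N).roots.sort (· ≤ ·) = (List.range N).map a := by
    apply List.Perm.eq_of_pairwise' (Multiset.pairwise_sort _ _) hsorted
    apply Multiset.coe_eq_coe.mp
    rw [Multiset.sort_eq]
    exact hlist
  have hx_eq : ∀ i, 1 ≤ i → i ≤ N → x i = a (i-1) := by
    intro i h1 h2
    rw [hx i, hsortlist]
    have hlen : i - 1 < ((List.range N).map a).length := by
      rw [List.length_map, List.length_range]; omega
    rw [List.getD_eq_getElem _ _ hlen]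
    simp
  -- orthogonality over the index range
  have horth : ∀ k l, k < N → l < N → k ≠ l →
      ∑ j ∈ Finset.range N, eval (a j) (Q k) * eval (a j) (Q l) = 0 := by
    intro k l hk hl hkl
    have := hQorth k hk l hl hkl
    rw [hroots_eq, Multiset.map_map] at this
    rw [← this, Finset.sum_eq_multiset_sum]
    rfl
  intro i h1i hiN
  rcases Nat.eq_zero_or_pos m with hm0 | hmpos
  · -- m = 0 : Q 0 = 1
    subst hm0
    have hQ0 : Q 0 = 1 := by
      have h0 := hQdeg 0 (by omega)
      have hc := Polynomial.eq_C_of_natDegree_eq_zero h0.2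
      have h1 : (Q 0).coeff 0 = 1 := by
        have := h0.1
        rw [Polynomial.Monic, Polynomial.leadingCoeff, h0.2] at this
        exact this
      rw [hc, h1, map_one]
    rw [hQ0]
    simp
  -- main case m ≥ 1
  have hmN : m < N := by omega
  have hQmdeg : (Q m).natDegree = m := (hQdeg m hmN).2
  have hQmc : (Q m).coeff m = 1 := by
    have := (hQdeg m hmN).1
    rw [Polynomial.Monic, Polynomial.leadingCoeff, hQmdeg] at this
    exact this
  obtain ⟨g, hgdeg, hgcoeff, hgeval⟩ := exists_Afun N a hinj hrecip (Q m)
  set w := g - C ((m:ℝ)/2) * Q m with hw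
  have hwdeg : w.degree < (m:ℕ) := by
    rw [Polynomial.degree_lt_iff_coeff_zero]
    intro k hk
    have hk' : m ≤ k := by exact_mod_cast hk
    rw [hw, Polynomial.coeff_sub, Polynomial.coeff_C_mul]
    rcases lt_or_eq_of_le hk' with h | h
    · rw [hgcoeff k (by omega : (Q m).natDegree ≤ k),
        Polynomial.coeff_eq_zero_of_natDegree_lt (by omega : (Q m).natDegree < k)]
      ring
    · rw [← h, hgcoeff m (le_of_eq hQmdeg), hQmc]
      ring
  have hworth : ∀ k, k < m → ∑ j ∈ Finset.range N, eval (a j) (Q k) * eval (a j) w = 0 := by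
    intro k hk
    have hkN : k < N := by omega
    obtain ⟨gk, hgkdeg, _, hgkeval⟩ := exists_Afun N a hinj hrecip (Q k)
    have hsw := Bswap (Finset.range N) a (fun j => eval (a j) (Q m)) (fun j => eval (a j) (Q k))
    have hL : ∑ j ∈ Finset.range N,
        (∑ l ∈ (Finset.range N).erase j, (eval (a j) (Q m) - eval (a l) (Q m)) / (a j - a l)^2)
          * eval (a j) (Q k)
        = ∑ j ∈ Finset.range N, eval (a j) g * eval (a j) (Q k) := by
      apply Finset.sum_congr rfl
      intro j hj
      rw [hgeval j (Finset.mem_range.mp hj)]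
    have hR : ∑ j ∈ Finset.range N,
        (∑ l ∈ (Finset.range N).erase j, (eval (a j) (Q k) - eval (a l) (Q k)) / (a j - a l)^2)
          * eval (a j) (Q m)
        = ∑ j ∈ Finset.range N, eval (a j) gk * eval (a j) (Q m) := by
      apply Finset.sum_congr rfl
      intro j hj
      rw [hgkeval j (Finset.mem_range.mp hj)]
    rw [hL, hR] at hsw
    have hgk0 : ∑ j ∈ Finset.range N, eval (a j) gk * eval (a j) (Q m) = 0 := by
      apply inner_expand N a Q hQdeg (Q m) m (by omega)
      · intro l hl
        exact horth l m (by omega) hmN (by omega)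
      · calc gk.degree ≤ (gk.natDegree : WithBot ℕ) := Polynomial.degree_le_natDegree
          _ < (m : WithBot ℕ) := by
              exact_mod_cast lt_of_le_of_lt (le_trans hgkdeg (le_of_eq (hQdeg k hkN).2)) hk
    have hsplit : ∑ j ∈ Finset.range N, eval (a j) (Q k) * eval (a j) w
        = ∑ j ∈ Finset.range N, eval (a j) g * eval (a j) (Q k)
          - ((m:ℝ)/2) * ∑ j ∈ Finset.range N, eval (a j) (Q k) * eval (a j) (Q m) := by
      rw [Finset.mul_sum, ← Finset.sum_sub_distrib]
      apply Finset.sum_congr rfl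
      intro j _
      rw [hw]
      simp only [eval_sub, eval_mul, eval_C]
      ring
    rw [hsplit, hsw, hgk0, horth k m hkN hmN (by omega)]
    ring
  have hww : ∑ j ∈ Finset.range N, eval (a j) w * eval (a j) w = 0 := by
    apply inner_expand N a Q hQdeg w m (by omega) hworth w
    exact_mod_cast hwdeg
  have hwzero : ∀ j, j < N → eval (a j) w = 0 := by
    intro j hj
    have hnn : ∀ l ∈ Finset.range N, 0 ≤ eval (a l) w * eval (a l) w :=
      fun l _ => mul_self_nonneg _
    have := (Finset.sum_eq_zero_iff_of_nonneg hnn).mp hww j (Finset.mem_range.mpr hj)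
    exact mul_self_eq_zero.mp this
  have hkey : ∀ j, j < N → eval (a j) g = ((m:ℝ)/2) * eval (a j) (Q m) := by
    intro j hj
    have := hwzero j hj
    rw [hw] at this
    simp only [eval_sub, eval_mul, eval_C] at this
    linarith
  -- final reindexing
  have hi1 : i - 1 < N := by omega
  rw [hx_eq i h1i hiN]
  rw [← hkey (i-1) hi1, hgeval (i-1) hi1]
  apply Finset.sum_nbij' (i := fun j => j + 1) (j := fun j => j - 1)
  · intro l hl
    simp only [Finset.mem_erase, Finset.mem_range] at hl
    simp only [Finset.mem_erase, Finset.mem_Icc]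
    omega
  · intro l hl
    simp only [Finset.mem_erase, Finset.mem_Icc] at hl
    simp only [Finset.mem_erase, Finset.mem_range]
    omega
  · intro l hl
    omega
  · intro l hl
    simp only [Finset.mem_erase, Finset.mem_Icc] at hl
    omega
  · intro l hl
    simp only [Finset.mem_erase, Finset.mem_range] at hl
    rw [hx_eq (l+1) (by omega) (by omega)]
    simp
end

section
/- Let m < N be natural numbers. Then the series over j = 0, 1, 2, … with terms T_j = [ (N+j)·(N+j−1)·⋯·(N+j−m) / (N+j+1) ] · [ ( (N−m)·(N−m+1)·⋯·(N−m+j−1) ) / ( (N+1)·(N+2)·⋯·(N+j) ) ]² (where the products in the second bracket each have j factors and equal 1 when j = 0, and the product in the first bracket has m + 1 factors) converges, with sum Σ_{j=0}^∞ T_j = (N−m)·(N−m+1)·⋯·N / (m+1), the numerator being the product of the m + 1 integers from N − m up to N. -/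
theorem stmt15 (N m : ℕ) (hm : m < N) :
    HasSum
      (fun j : ℕ =>
        ((∏ i ∈ Finset.range (m + 1), ((N : ℝ) + (j : ℝ) - (i : ℝ))) / ((N : ℝ) + (j : ℝ) + 1)) *
          ((∏ i ∈ Finset.range j, ((N : ℝ) - (m : ℝ) + (i : ℝ))) /
              (∏ i ∈ Finset.range j, ((N : ℝ) + 1 + (i : ℝ)))) ^ 2)
      ((∏ i ∈ Finset.range (m + 1), ((N : ℝ) - (m : ℝ) + (i : ℝ))) / ((m : ℝ) + 1)) := by
  have hmN : (m : ℝ) + 1 ≤ (N : ℝ) := by exact_mod_cast hm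
  set r : ℕ → ℝ := fun j => ∏ i ∈ Finset.range j, (((N : ℝ) - m + i) / ((N : ℝ) + 1 + i))
    with hr
  set C : ℝ := ∏ i ∈ Finset.range (m + 1), ((N : ℝ) - (m : ℝ) + (i : ℝ)) with hC
  -- positivity of factors
  have hfac_pos : ∀ i : ℕ, (0 : ℝ) < (N : ℝ) - m + i := fun i => by
    have : (0 : ℝ) ≤ (i : ℕ) := Nat.cast_nonneg i
    nlinarith [Nat.cast_nonneg (α := ℝ) i]
  have hden_pos : ∀ i : ℕ, (0 : ℝ) < (N : ℝ) + 1 + i := fun i => by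
    nlinarith [Nat.cast_nonneg (α := ℝ) i]
  have hr_pos : ∀ j, 0 < r j := fun j =>
    Finset.prod_pos fun i _ => div_pos (hfac_pos i) (hden_pos i)
  -- key lemma: r j * P j = C
  have key : ∀ j : ℕ,
      r j * ∏ i ∈ Finset.range (m + 1), ((N : ℝ) + (j : ℝ) - (i : ℝ)) = C := by
    intro j
    induction j with
    | zero =>
      simp only [hr, Finset.prod_range_zero, one_mul, Nat.cast_zero, add_zero]
      rw [hC, ← Finset.prod_range_reflect]
      refine Finset.prod_congr rfl fun i hi => ?_
      have hi' : i ≤ m := Nat.lt_succ_iff.mp (Finset.mem_range.mp hi)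
      have : ((m + 1 - 1 - i : ℕ) : ℝ) = (m : ℝ) - i := by
        simp only [Nat.add_sub_cancel]
        push_cast [Nat.cast_sub hi']
        ring
      rw [this]; ring
    | succ j ih =>
      have hP : ((N : ℝ) - m + j) * ∏ i ∈ Finset.range (m + 1), ((N : ℝ) + ((j : ℝ) + 1) - i)
          = ((N : ℝ) + 1 + j) * ∏ i ∈ Finset.range (m + 1), ((N : ℝ) + (j : ℝ) - i) := by
        have h1 := Finset.prod_range_succ (fun i : ℕ => (N : ℝ) + (j : ℝ) + 1 - i) (m + 1)
        have h2 := Finset.prod_range_succ' (fun i : ℕ => (N : ℝ) + (j : ℝ) + 1 - i) (m + 1)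
        simp only [Nat.cast_zero, Nat.cast_add, Nat.cast_one] at h1 h2
        have h3 : (∏ i ∈ Finset.range (m + 1), ((N : ℝ) + (j : ℝ) + 1 - ((i : ℝ) + 1)))
            = ∏ i ∈ Finset.range (m + 1), ((N : ℝ) + (j : ℝ) - i) := by
          refine Finset.prod_congr rfl fun i _ => by ring
        have h4 : (∏ i ∈ Finset.range (m + 1), ((N : ℝ) + ((j : ℝ) + 1) - i))
            = ∏ i ∈ Finset.range (m + 1), ((N : ℝ) + (j : ℝ) + 1 - i) := by
          refine Finset.prod_congr rfl fun i _ => by ring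
        rw [h4]
        have := h1.symm.trans h2
        rw [h3] at this
        -- combine
        nlinarith [this]
      have hrsucc : r (j + 1) = r j * (((N : ℝ) - m + j) / ((N : ℝ) + 1 + j)) :=
        Finset.prod_range_succ (fun i : ℕ => ((N : ℝ) - m + i) / ((N : ℝ) + 1 + i)) j
      push_cast
      rw [hrsucc]
      have hd : ((N : ℝ) + 1 + j) ≠ 0 := ne_of_gt (hden_pos j)
      calc r j * (((N : ℝ) - m + j) / ((N : ℝ) + 1 + j)) *
            ∏ i ∈ Finset.range (m + 1), ((N : ℝ) + ((j : ℝ) + 1) - i)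
          = r j * ((((N : ℝ) - m + j) *
            ∏ i ∈ Finset.range (m + 1), ((N : ℝ) + ((j : ℝ) + 1) - i)) / ((N : ℝ) + 1 + j)) := by
            ring
        _ = r j * ((((N : ℝ) + 1 + j) *
            ∏ i ∈ Finset.range (m + 1), ((N : ℝ) + (j : ℝ) - i)) / ((N : ℝ) + 1 + j)) := by
            rw [hP]
        _ = r j * ∏ i ∈ Finset.range (m + 1), ((N : ℝ) + (j : ℝ) - i) := by
            rw [mul_comm ((N : ℝ) + 1 + (j : ℝ)), mul_div_assoc, div_self hd, mul_one]
        _ = C := ih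
  -- per-term identity
  have hterm : ∀ j : ℕ,
      ((∏ i ∈ Finset.range (m + 1), ((N : ℝ) + (j : ℝ) - (i : ℝ))) / ((N : ℝ) + (j : ℝ) + 1)) *
          ((∏ i ∈ Finset.range j, ((N : ℝ) - (m : ℝ) + (i : ℝ))) /
              (∏ i ∈ Finset.range j, ((N : ℝ) + 1 + (i : ℝ)))) ^ 2
        = C / ((m : ℝ) + 1) * r j - C / ((m : ℝ) + 1) * r (j + 1) := by
    intro j
    have hratio : (∏ i ∈ Finset.range j, ((N : ℝ) - (m : ℝ) + (i : ℝ))) /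
        (∏ i ∈ Finset.range j, ((N : ℝ) + 1 + (i : ℝ))) = r j :=
      (Finset.prod_div_distrib _ _).symm
    rw [hratio]
    have hrsucc : r (j + 1) = r j * (((N : ℝ) - m + j) / ((N : ℝ) + 1 + j)) :=
      Finset.prod_range_succ (fun i : ℕ => ((N : ℝ) - m + i) / ((N : ℝ) + 1 + i)) j
    rw [hrsucc]
    have hkey := key j
    have hd : ((N : ℝ) + 1 + j) ≠ 0 := ne_of_gt (hden_pos j)
    have hd2 : ((N : ℝ) + (j : ℝ) + 1) = ((N : ℝ) + 1 + j) := by ring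
    have hm1 : ((m : ℝ) + 1) ≠ 0 := by positivity
    rw [hd2]
    field_simp
    linear_combination (((m : ℝ) + 1) * r j) * hkey
  simp only [hterm]
  -- nonneg of terms
  have hnonneg : ∀ j : ℕ, (0 : ℝ) ≤ C / ((m : ℝ) + 1) * r j - C / ((m : ℝ) + 1) * r (j + 1) := by
    intro j
    rw [← hterm j]
    have h1 : (0 : ℝ) ≤ ∏ i ∈ Finset.range (m + 1), ((N : ℝ) + (j : ℝ) - (i : ℝ)) := by
      refine Finset.prod_nonneg fun i hi => ?_
      have hi' : i ≤ m := Nat.lt_succ_iff.mp (Finset.mem_range.mp hi)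
      have : (i : ℝ) ≤ (m : ℝ) := by exact_mod_cast hi'
      nlinarith [Nat.cast_nonneg (α := ℝ) j]
    positivity
  rw [hasSum_iff_tendsto_nat_of_nonneg hnonneg]
  have hsum : ∀ n : ℕ, (∑ j ∈ Finset.range n,
      (C / ((m : ℝ) + 1) * r j - C / ((m : ℝ) + 1) * r (j + 1)))
      = C / ((m : ℝ) + 1) - C / ((m : ℝ) + 1) * r n := by
    intro n
    rw [Finset.sum_range_sub' (fun j => C / ((m : ℝ) + 1) * r j)]
    simp [hr]
  simp only [hsum]
  -- r n → 0
  have hub : ∀ n : ℕ, r n ≤ (N : ℝ) / ((N : ℝ) + n) := by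
    intro n
    have hs : (∏ i ∈ Finset.range n, (((N : ℝ) + i) / ((N : ℝ) + 1 + i)))
        = (N : ℝ) / ((N : ℝ) + n) := by
      induction n with
      | zero =>
        have hN : (0 : ℝ) < N := by nlinarith
        simp [div_self (ne_of_gt hN)]
      | succ n ih =>
        rw [Finset.prod_range_succ, ih]
        have h1 : ((N : ℝ) + n) ≠ 0 := by
          have : (0 : ℝ) < N := by nlinarith
          positivity
        have h2 : ((N : ℝ) + 1 + n) ≠ 0 := ne_of_gt (hden_pos n)
        push_cast
        rw [div_mul_div_comm]
        rw [div_eq_div_iff (by positivity) (by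
          have : (0 : ℝ) < N := by nlinarith
          positivity)]
        ring
    rw [← hs, hr]
    refine Finset.prod_le_prod (fun i _ => le_of_lt (div_pos (hfac_pos i) (hden_pos i)))
      fun i _ => ?_
    rw [div_le_div_iff_of_pos_right (hden_pos i)]
    nlinarith [Nat.cast_nonneg (α := ℝ) i, Nat.cast_nonneg (α := ℝ) m]
  have htend : Filter.Tendsto (fun n : ℕ => r n) Filter.atTop (nhds 0) := by
    have h0 : Filter.Tendsto (fun n : ℕ => (N : ℝ) / ((N : ℝ) + n)) Filter.atTop (nhds 0) := by
      have h1 : Filter.Tendsto (fun n : ℕ => (N : ℝ) + n) Filter.atTop Filter.atTop :=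
        Filter.tendsto_atTop_add_const_left _ _ tendsto_natCast_atTop_atTop
      simpa [div_eq_mul_inv] using h1.inv_tendsto_atTop.const_mul (N : ℝ)
    refine tendsto_of_tendsto_of_tendsto_of_le_of_le tendsto_const_nhds h0
      (fun n => le_of_lt (hr_pos n)) hub
  have := (htend.const_mul (C / ((m : ℝ) + 1))).const_sub (C / ((m : ℝ) + 1))
  simpa using this
end

section
/- Let f : ℝ → ℝ be twice differentiable with f''(t) = t·f(t) for all t ∈ ℝ, and fix a ∈ ℝ. Then for every y ∈ ℝ, the function G(y) = ((2a − y)/3)·f'(y+a)² + (1/3)·f'(y+a)·f(y+a) + ((y+a)·(y−2a)/3)·f(y+a)² is differentiable at y with G'(y) = y·f(y+a)². -/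
theorem stmt16 (f : ℝ → ℝ) (hf : Differentiable ℝ f) (hf' : Differentiable ℝ (deriv f))
    (hairy : ∀ t : ℝ, deriv (deriv f) t = t * f t) (a : ℝ) (y : ℝ) :
    HasDerivAt
      (fun y : ℝ =>
        (2 * a - y) / 3 * (deriv f (y + a)) ^ 2
          + (1 / 3) * deriv f (y + a) * f (y + a)
          + (y + a) * (y - 2 * a) / 3 * (f (y + a)) ^ 2)
      (y * (f (y + a)) ^ 2) y := by
  have hid : HasDerivAt (fun y : ℝ => y + a) 1 y := (hasDerivAt_id y).add_const a
  have h1 : HasDerivAt (fun y : ℝ => f (y + a)) (deriv f (y + a)) y := by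
    exact ((hf (y + a)).hasDerivAt).comp_add_const y a
  have h2 : HasDerivAt (fun y : ℝ => deriv f (y + a)) ((y + a) * f (y + a)) y := by
    have := ((hf' (y + a)).hasDerivAt).comp_add_const y a
    simpa [hairy (y + a)] using this
  have hc1 : HasDerivAt (fun y : ℝ => (2 * a - y) / 3) (-(1 / 3) : ℝ) y := by
    have : HasDerivAt (fun y : ℝ => (2 * a - y) / 3) ((0 - 1) / 3) y :=
      ((hasDerivAt_const y (2 * a)).sub (hasDerivAt_id y)).div_const 3
    convert this using 1; ring
  have hc2 : HasDerivAt (fun y : ℝ => (y + a) * (y - 2 * a) / 3) ((2 * y - a) / 3) y := by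
    have : HasDerivAt (fun y : ℝ => (y + a) * (y - 2 * a) / 3)
        ((1 * (y - 2 * a) + (y + a) * 1) / 3) y :=
      (hid.mul ((hasDerivAt_id y).sub_const (2 * a))).div_const 3
    convert this using 1; ring
  have H1 := hc1.mul (h2.pow 2)
  have H2 := ((hasDerivAt_const y ((1:ℝ)/3)).mul h2).mul h1
  have H3 := hc2.mul (h1.pow 2)
  have Hfull := (H1.add H2).add H3
  convert Hfull using 1
  · rfl
  · rfl
  · rfl
  simp only [Pi.pow_apply, Pi.mul_apply]
  push_cast
  ring
end

section
/- Let f : ℝ → ℝ be twice differentiable with f''(t) = t·f(t) for all t ∈ ℝ, and fix a, b ∈ ℝ with a ≠ b. Then for every y ∈ ℝ, the function G(y) = 2·f'(y+a)·f'(y+b) + (a − b)·( y·f'(y+a)·f(y+b) − y·f(y+a)·f'(y+b) ) − 2y·f(y+a)·f(y+b) − (a + b)·f(y+a)·f(y+b) + 2·( f(y+a)·f'(y+b) − f'(y+a)·f(y+b) )/(b − a) is differentiable at y with G'(y) = (a − b)²·y·f(y+a)·f(y+b). -/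
theorem stmt17 (f : ℝ → ℝ) (hf : Differentiable ℝ f) (hf' : Differentiable ℝ (deriv f))
    (hairy : ∀ t : ℝ, deriv (deriv f) t = t * f t) (a b : ℝ) (hab : a ≠ b) (y : ℝ) :
    HasDerivAt
      (fun y : ℝ =>
        2 * deriv f (y + a) * deriv f (y + b)
          + (a - b) * (y * deriv f (y + a) * f (y + b) - y * f (y + a) * deriv f (y + b))
          - 2 * y * f (y + a) * f (y + b)
          - (a + b) * f (y + a) * f (y + b)
          + 2 * (f (y + a) * deriv f (y + b) - deriv f (y + a) * f (y + b)) / (b - a))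
      ((a - b) ^ 2 * y * f (y + a) * f (y + b)) y := by
  have hba : b - a ≠ 0 := sub_ne_zero.mpr (Ne.symm hab)
  have hfa : HasDerivAt (fun y : ℝ => f (y + a)) (deriv f (y + a)) y := by
    simpa [Function.comp_def] using (hf (y + a)).hasDerivAt.comp y ((hasDerivAt_id y).add_const a)
  have hfb : HasDerivAt (fun y : ℝ => f (y + b)) (deriv f (y + b)) y := by
    simpa [Function.comp_def] using (hf (y + b)).hasDerivAt.comp y ((hasDerivAt_id y).add_const b)
  have hda : HasDerivAt (fun y : ℝ => deriv f (y + a)) ((y + a) * f (y + a)) y := by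
    have := (hf' (y + a)).hasDerivAt.comp y ((hasDerivAt_id y).add_const a)
    simpa [hairy, Function.comp_def] using this
  have hdb : HasDerivAt (fun y : ℝ => deriv f (y + b)) ((y + b) * f (y + b)) y := by
    have := (hf' (y + b)).hasDerivAt.comp y ((hasDerivAt_id y).add_const b)
    simpa [hairy, Function.comp_def] using this
  have h1 := (hda.const_mul 2).mul hdb
  have h2 := ((((hasDerivAt_id y).mul hda).mul hfb).sub
    (((hasDerivAt_id y).mul hfa).mul hdb)).const_mul (a - b)
  have h3 := (((hasDerivAt_id y).const_mul 2).mul hfa).mul hfb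
  have h4 := (hfa.const_mul (a + b)).mul hfb
  have h5 := (((hfa.mul hdb).sub (hda.mul hfb)).const_mul 2).div_const (b - a)
  have H := (((h1.add h2).sub h3).sub h4).add h5
  convert H using 1
  · rfl
  · rfl
  · rfl
  simp only [id, Pi.mul_apply]
  field_simp
  ring
end

section
/- Let f : ℝ → ℝ be twice differentiable with f''(t) = t·f(t) for all t ∈ ℝ, and let α ∈ ℝ satisfy f(α) = 0. Assume that y·f(y)² → 0 and f'(y) → 0 as y → +∞. Then the integrals ∫_α^T f(y)² dy converge, as T → +∞, to f'(α)². -/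
open Filter

theorem stmt18 (f : ℝ → ℝ) (hf : Differentiable ℝ f) (hf' : Differentiable ℝ (deriv f))
    (hairy : ∀ t : ℝ, deriv (deriv f) t = t * f t)
    (α : ℝ) (hα : f α = 0)
    (hyf : Tendsto (fun y : ℝ => y * (f y) ^ 2) atTop (nhds 0))
    (hf'lim : Tendsto (deriv f) atTop (nhds 0)) :
    Tendsto (fun T : ℝ => ∫ y in α..T, (f y) ^ 2) atTop (nhds ((deriv f α) ^ 2)) := by
  set g : ℝ → ℝ := fun y => (deriv f y) ^ 2 - y * (f y) ^ 2 with hg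
  have hd : ∀ y : ℝ, HasDerivAt g (-(f y) ^ 2) y := by
    intro y
    have h1 : HasDerivAt f (deriv f y) y := (hf y).hasDerivAt
    have h2 : HasDerivAt (deriv f) (y * f y) y := by
      have := (hf' y).hasDerivAt
      rwa [hairy y] at this
    have h3 : HasDerivAt (fun y => (deriv f y) ^ 2)
        (2 * (deriv f y) ^ 1 * (y * f y)) y := h2.pow 2
    have h4 : HasDerivAt (fun y => (f y) ^ 2) (2 * (f y) ^ 1 * deriv f y) y := h1.pow 2
    have h5 : HasDerivAt (fun y => y * (f y) ^ 2)
        (1 * (f y) ^ 2 + y * (2 * (f y) ^ 1 * deriv f y)) y :=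
      (hasDerivAt_id y).mul h4
    have := h3.sub h5
    refine this.congr_deriv ?_
    ring
  have key : ∀ T : ℝ, (∫ y in α..T, (f y) ^ 2) = g α - g T := by
    intro T
    have hint : IntervalIntegrable (fun y => -(f y) ^ 2) MeasureTheory.volume α T :=
      ((hf.continuous.pow 2).neg).intervalIntegrable α T
    have := intervalIntegral.integral_eq_sub_of_hasDerivAt (fun y _ => hd y) hint
    have h2 : (∫ y in α..T, -(f y) ^ 2) = -(∫ y in α..T, (f y) ^ 2) := by
      simp [intervalIntegral.integral_neg]
    rw [h2] at this
    linarith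
  simp only [key]
  have hgα : g α = (deriv f α) ^ 2 := by simp [hg, hα]
  have hgT : Tendsto g atTop (nhds 0) := by
    have h1 : Tendsto (fun y => (deriv f y) ^ 2) atTop (nhds 0) := by
      have := hf'lim.pow 2
      simpa using this
    have := h1.sub hyf
    simpa using this
  have := (tendsto_const_nhds (x := g α)).sub hgT
  rw [← hgα]
  simpa using this
end

section
/- Let f : ℝ → ℝ be twice differentiable with f''(t) = t·f(t) for all t ∈ ℝ, and let a, b ∈ ℝ with a ≠ b, f(a) = 0 and f(b) = 0. Assume that f(y) → 0 and f'(y) → 0 as y → +∞. Then the integrals ∫_0^T f(a + y)·f(b + y) dy converge to 0 as T → +∞. -/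
open Filter

theorem stmt19 (f : ℝ → ℝ) (hf : Differentiable ℝ f) (hf' : Differentiable ℝ (deriv f))
    (hairy : ∀ t : ℝ, deriv (deriv f) t = t * f t)
    (a b : ℝ) (hab : a ≠ b) (ha : f a = 0) (hb : f b = 0)
    (hflim : Tendsto f atTop (nhds 0))
    (hf'lim : Tendsto (deriv f) atTop (nhds 0)) :
    Tendsto (fun T : ℝ => ∫ y in (0 : ℝ)..T, f (a + y) * f (b + y)) atTop (nhds 0) := by
  have hba : b - a ≠ 0 := sub_ne_zero.2 (Ne.symm hab)
  set g : ℝ → ℝ := fun y =>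
    (f (a + y) * deriv f (b + y) - deriv f (a + y) * f (b + y)) / (b - a) with hg
  have hderiv : ∀ y : ℝ, HasDerivAt g (f (a + y) * f (b + y)) y := by
    intro y
    have hfa : HasDerivAt (fun y => f (a + y)) (deriv f (a + y)) y := by
      simpa [Function.comp_def] using ((hf (a + y)).hasDerivAt.comp y
        ((hasDerivAt_id y).const_add a))
    have hfb : HasDerivAt (fun y => f (b + y)) (deriv f (b + y)) y := by
      simpa [Function.comp_def] using ((hf (b + y)).hasDerivAt.comp y
        ((hasDerivAt_id y).const_add b))
    have hfa' : HasDerivAt (fun y => deriv f (a + y)) ((a + y) * f (a + y)) y := by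
      have := (hf' (a + y)).hasDerivAt.comp y ((hasDerivAt_id y).const_add a)
      simpa [hairy, Function.comp_def] using this
    have hfb' : HasDerivAt (fun y => deriv f (b + y)) ((b + y) * f (b + y)) y := by
      have := (hf' (b + y)).hasDerivAt.comp y ((hasDerivAt_id y).const_add b)
      simpa [hairy, Function.comp_def] using this
    have h1 := (hfa.mul hfb').sub (hfa'.mul hfb)
    have h2 := h1.div_const (b - a)
    refine h2.congr_deriv ?_
    rw [div_eq_iff hba]
    ring
  have hcont : Continuous fun y => f (a + y) * f (b + y) := by
    have := hf.continuous
    fun_prop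
  have hint : ∀ T : ℝ, (∫ y in (0:ℝ)..T, f (a + y) * f (b + y)) = g T - g 0 := by
    intro T
    exact intervalIntegral.integral_eq_sub_of_hasDerivAt
      (fun y _ => hderiv y) (hcont.intervalIntegrable 0 T)
  have hg0 : g 0 = 0 := by
    simp [hg, ha, hb]
  have htopa : Tendsto (fun y : ℝ => a + y) atTop atTop := tendsto_atTop_add_const_left _ a tendsto_id
  have htopb : Tendsto (fun y : ℝ => b + y) atTop atTop := tendsto_atTop_add_const_left _ b tendsto_id
  have hgt : Tendsto g atTop (nhds 0) := by
    have : Tendsto (fun y => f (a + y) * deriv f (b + y) - deriv f (a + y) * f (b + y))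
        atTop (nhds (0 * 0 - 0 * 0)) :=
      ((hflim.comp htopa).mul (hf'lim.comp htopb)).sub
        ((hf'lim.comp htopa).mul (hflim.comp htopb))
    simpa [hg] using this.div_const (b - a)
  have : Tendsto (fun T => g T - g 0) atTop (nhds (0 - 0)) := by
    rw [hg0]; exact hgt.sub tendsto_const_nhds
  simpa [hint, hg0] using this
end
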